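/- arXiv:1511.05826 — 3 statements merged into one kernel-verified Lean document; each statement's English description precedes it below -/
import Mathlib

section
/- For monotone maps between finite linear orders, there is a natural bijection between the set of functors [n+1] → [m+1] preserving both endpoints (i.e. sending 0 to 0 and n+1 to m+1 and preserving order) and the set of order-preserving maps [m] → [n]; explicitly, a bi-pointed monotone map φ : [n+1] → [m+1] corresponds to ψ : [m] → [n] determined by ψ(i) + 1 = min { j | φ(j) > i }. -/
namespace JoyalAux

variable {n m : ℕ}

def Sset (φ : Fin (n+2) →o Fin (m+2)) (i : ℕ) : Set ℕ :=
  {j | ∃ hj : j < n + 2, i < (φ ⟨j, hj⟩ : ℕ)}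

def Gset (ψ : Fin (m+1) →o Fin (n+1)) (j : ℕ) : Set ℕ :=
  {i | i = m + 1 ∨ ∃ h : i < m + 1, j ≤ (ψ ⟨i, h⟩ : ℕ)}
lemma mem_Sset_top (φ : Fin (n+2) →o Fin (m+2))
    (hφ1 : φ (Fin.last (n+1)) = Fin.last (m+1)) {i : ℕ} (hi : i ≤ m) :
    n + 1 ∈ Sset φ i := by
  refine ⟨by omega, ?_⟩
  have h : φ ⟨n+1, by omega⟩ = Fin.last (m+1) := hφ1
  rw [h]
  simp [Fin.last]
  omega

lemma sInf_Sset_le (φ : Fin (n+2) →o Fin (m+2))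
    (hφ1 : φ (Fin.last (n+1)) = Fin.last (m+1)) {i : ℕ} (hi : i ≤ m) :
    sInf (Sset φ i) ≤ n + 1 :=
  Nat.sInf_le (mem_Sset_top φ hφ1 hi)

lemma sInf_Sset_pos (φ : Fin (n+2) →o Fin (m+2)) (hφ0 : φ 0 = 0)
    (hφ1 : φ (Fin.last (n+1)) = Fin.last (m+1)) {i : ℕ} (hi : i ≤ m) :
    1 ≤ sInf (Sset φ i) := by
  rcases Nat.eq_zero_or_pos (sInf (Sset φ i)) with h | h
  · exfalso
    have hne : (Sset φ i).Nonempty := ⟨n+1, mem_Sset_top φ hφ1 hi⟩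
    have hmem := Nat.sInf_mem hne
    rw [h] at hmem
    obtain ⟨hj, hlt⟩ := hmem
    have h0 : (⟨0, hj⟩ : Fin (n+2)) = 0 := rfl
    rw [h0, hφ0] at hlt
    simp at hlt
  · exact h

lemma mem_Sset_iff (φ : Fin (n+2) →o Fin (m+2))
    (hφ1 : φ (Fin.last (n+1)) = Fin.last (m+1)) {i j : ℕ} (hi : i ≤ m) (hj : j < n + 2) :
    j ∈ Sset φ i ↔ sInf (Sset φ i) ≤ j := by
  constructor
  · exact fun h => Nat.sInf_le h
  · intro h
    have hne : (Sset φ i).Nonempty := ⟨n+1, mem_Sset_top φ hφ1 hi⟩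
    obtain ⟨hlt, hgt⟩ := Nat.sInf_mem hne
    refine ⟨hj, lt_of_lt_of_le hgt ?_⟩
    exact φ.monotone (by simp [Fin.mk_le_mk, h])

lemma mem_Gset_top (ψ : Fin (m+1) →o Fin (n+1)) (j : ℕ) : m + 1 ∈ Gset ψ j :=
  Or.inl rfl

lemma sInf_Gset_le (ψ : Fin (m+1) →o Fin (n+1)) (j : ℕ) :
    sInf (Gset ψ j) ≤ m + 1 := Nat.sInf_le (mem_Gset_top ψ j)

lemma sInf_Gset_le_iff (ψ : Fin (m+1) →o Fin (n+1)) (j : ℕ) {i : ℕ} (hi : i < m + 1) :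
    sInf (Gset ψ j) ≤ i ↔ j ≤ (ψ ⟨i, hi⟩ : ℕ) := by
  constructor
  · intro h
    obtain hmem := Nat.sInf_mem (⟨m+1, mem_Gset_top ψ j⟩ : (Gset ψ j).Nonempty)
    rcases hmem with heq | ⟨hlt, hle⟩
    · omega
    · exact le_trans hle (ψ.monotone (by simp [Fin.mk_le_mk, h]))
  · intro h
    exact Nat.sInf_le (Or.inr ⟨hi, h⟩)

lemma sInf_Gset_zero (ψ : Fin (m+1) →o Fin (n+1)) : sInf (Gset ψ 0) = 0 :=
  Nat.le_antisymm (Nat.sInf_le (Or.inr ⟨by omega, Nat.zero_le _⟩)) (Nat.zero_le _)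

lemma sInf_Gset_top (ψ : Fin (m+1) →o Fin (n+1)) : sInf (Gset ψ (n+1)) = m + 1 := by
  have hsub : Gset ψ (n+1) = {m+1} := by
    ext i
    constructor
    · rintro (h | ⟨h, hle⟩)
      · exact h
      · exact absurd hle (by have := (ψ ⟨i, h⟩).is_le; omega)
    · rintro rfl; exact Or.inl rfl
  rw [hsub]
  simp

/-- the forward map -/
noncomputable def F (φ : {φ : Fin (n + 2) →o Fin (m + 2) //
    φ 0 = 0 ∧ φ (Fin.last (n + 1)) = Fin.last (m + 1)}) : Fin (m + 1) →o Fin (n + 1) where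
  toFun i := ⟨sInf (Sset φ.1 i) - 1, by
    have := sInf_Sset_le φ.1 φ.2.2 (i.is_le); omega⟩
  monotone' := by
    intro i i' h
    simp only [Fin.mk_le_mk]
    have : sInf (Sset φ.1 i) ≤ sInf (Sset φ.1 i') := by
      apply le_csInf ⟨n+1, mem_Sset_top φ.1 φ.2.2 (i'.is_le)⟩
      intro b hb
      exact Nat.sInf_le ⟨hb.1, lt_of_le_of_lt h hb.2⟩
    omega

/-- the inverse map -/
noncomputable def G (ψ : Fin (m + 1) →o Fin (n + 1)) : {φ : Fin (n + 2) →o Fin (m + 2) //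
    φ 0 = 0 ∧ φ (Fin.last (n + 1)) = Fin.last (m + 1)} := by
  refine ⟨⟨fun j => ⟨sInf (Gset ψ j), by have := sInf_Gset_le ψ j; omega⟩, ?_⟩, ?_, ?_⟩
  · intro j j' h
    simp only [Fin.mk_le_mk]
    apply le_csInf ⟨m+1, mem_Gset_top ψ j'⟩
    rintro b (rfl | ⟨hb, hle⟩)
    · exact sInf_Gset_le ψ j
    · exact Nat.sInf_le (Or.inr ⟨hb, le_trans h hle⟩)
  · ext
    exact sInf_Gset_zero ψ
  · ext
    exact sInf_Gset_top ψ

lemma left_inv (φ : {φ : Fin (n + 2) →o Fin (m + 2) //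
    φ 0 = 0 ∧ φ (Fin.last (n + 1)) = Fin.last (m + 1)}) : G (F φ) = φ := by
  apply Subtype.ext
  apply OrderHom.ext
  funext j
  apply Fin.ext
  show sInf (Gset (F φ) j) = (φ.1 j : ℕ)
  have key : ∀ i : ℕ, i < m + 1 → ((φ.1 j : ℕ) ≤ i ↔ sInf (Gset (F φ) j) ≤ i) := by
    intro i hi
    rw [sInf_Gset_le_iff _ _ hi]
    show _ ↔ (j : ℕ) ≤ sInf (Sset φ.1 i) - 1
    have h1 := sInf_Sset_pos φ.1 φ.2.1 φ.2.2 (Nat.lt_succ_iff.mp hi)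
    have h2 : (j : ℕ) ∈ Sset φ.1 i ↔ sInf (Sset φ.1 i) ≤ (j : ℕ) := by
      have := mem_Sset_iff φ.1 φ.2.2 (Nat.lt_succ_iff.mp hi) j.isLt
      simpa using this
    have h3 : ((j : ℕ) ∈ Sset φ.1 i) ↔ i < (φ.1 j : ℕ) := by
      constructor
      · rintro ⟨hj, hlt⟩
        convert hlt using 3
      · intro h
        exact ⟨j.isLt, by convert h using 3⟩
    constructor
    · intro h
      have : ¬ ((j : ℕ) ∈ Sset φ.1 i) := by rw [h3]; omega
      rw [h2] at this
      omega
    · intro h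
      have : ¬ (sInf (Sset φ.1 i) ≤ (j:ℕ)) := by omega
      rw [← h2, h3] at this
      omega
  have ha := sInf_Gset_le (F φ) (j : ℕ)
  have hb := (φ.1 j).is_le
  rcases lt_trichotomy (sInf (Gset (F φ) j)) ((φ.1 j : ℕ)) with h | h | h
  · exfalso
    have : (φ.1 j : ℕ) ≤ sInf (Gset (F φ) j) := (key _ (by omega)).mpr le_rfl
    omega
  · omega
  · exfalso
    have : sInf (Gset (F φ) j) ≤ (φ.1 j : ℕ) := (key _ (by omega)).mp le_rfl
    omega

lemma right_inv (ψ : Fin (m + 1) →o Fin (n + 1)) : F (G ψ) = ψ := by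
  apply OrderHom.ext
  funext i
  apply Fin.ext
  show sInf (Sset (G ψ).1 i) - 1 = (ψ i : ℕ)
  have hkey : Sset (G ψ).1 (i : ℕ) = {j | (ψ i : ℕ) + 1 ≤ j ∧ j < n + 2} := by
    ext j
    constructor
    · rintro ⟨hj, hlt⟩
      refine ⟨?_, hj⟩
      have : ¬ (sInf (Gset ψ j) ≤ (i : ℕ)) := by
        show ¬ ((((G ψ).1 ⟨j, hj⟩ : Fin (m+2)) : ℕ) ≤ (i : ℕ))
        omega
      rw [sInf_Gset_le_iff ψ j i.isLt] at this
      simp only [Fin.eta] at this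
      omega
    · rintro ⟨hle, hj⟩
      refine ⟨hj, ?_⟩
      show (i : ℕ) < sInf (Gset ψ j)
      by_contra hcon
      push_neg at hcon
      rw [sInf_Gset_le_iff ψ j i.isLt] at hcon
      simp only [Fin.eta] at hcon
      omega
  rw [hkey]
  have : sInf {j | (ψ i : ℕ) + 1 ≤ j ∧ j < n + 2} = (ψ i : ℕ) + 1 := by
    apply Nat.le_antisymm
    · exact Nat.sInf_le ⟨le_rfl, by have := (ψ i).is_le; omega⟩
    · exact le_csInf ⟨(ψ i : ℕ) + 1, le_rfl, by have := (ψ i).is_le; omega⟩ fun b hb => hb.1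
  rw [this]
  omega

end JoyalAux

/-- Joyal duality: for all `n m`, there is a bijection between bi-pointed
monotone maps `φ : [n+1] → [m+1]` (order-preserving, `φ(0) = 0`, `φ(n+1) = m+1`) and
order-preserving maps `ψ : [m] → [n]`, determined explicitly by
`ψ(i) + 1 = min { j | φ(j) > i }`. -/
theorem joyal_duality (n m : ℕ) :
    ∃ e : {φ : Fin (n + 2) →o Fin (m + 2) //
            φ 0 = 0 ∧ φ (Fin.last (n + 1)) = Fin.last (m + 1)} ≃
          (Fin (m + 1) →o Fin (n + 1)),
      ∀ (φ : {φ : Fin (n + 2) →o Fin (m + 2) //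
            φ 0 = 0 ∧ φ (Fin.last (n + 1)) = Fin.last (m + 1)})
        (i : Fin (m + 1)),
        ((e φ) i : ℕ) + 1
          = sInf {j : ℕ | ∃ hj : j < n + 2, (i : ℕ) < (φ.1 ⟨j, hj⟩ : ℕ)} := by
  refine ⟨⟨JoyalAux.F, JoyalAux.G, JoyalAux.left_inv, JoyalAux.right_inv⟩, ?_⟩
  intro φ i
  show sInf (JoyalAux.Sset φ.1 i) - 1 + 1 = sInf (JoyalAux.Sset φ.1 i)
  have := JoyalAux.sInf_Sset_pos φ.1 φ.2.1 φ.2.2 (i.is_le)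
  omega
end

section
/- Let X be a topological space pointed at *, and Y ⊆ X a subspace containing *. The maps Ω(X,Y) × Δ^k → X^k × Y sending (γ, (t₁ ≤ ⋯ ≤ t_k)) to (γ(t₁), …, γ(t_k), γ(1)) assemble into a homeomorphism from the relative loop space Ω(X,Y) to the totalization Tot(ω(X,Y)) of the cosimplicial relative loop space. -/
namespace RelLoopTot

variable {X : Type*} [TopologicalSpace X]

/-- The relative loop space `Ω(X,Y)`: continuous paths `γ : [0,1] → X` with
`γ(0) = *` and `γ(1) ∈ Y`, with the compact-open topology. -/
def RelLoop (star : X) (Y : Set X) : Type _ :=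
  {γ : C(unitInterval, X) // γ 0 = star ∧ γ 1 ∈ Y}

instance (star : X) (Y : Set X) : TopologicalSpace (RelLoop star Y) :=
  instTopologicalSpaceSubtype

/-- The topological `k`-simplex `Δ^k = {0 ≤ t₁ ≤ ⋯ ≤ t_k ≤ 1}`. -/
def simplex (k : ℕ) : Type :=
  {t : Fin k → unitInterval // Monotone t}

instance (k : ℕ) : TopologicalSpace (simplex k) := instTopologicalSpaceSubtype

/-- Auxiliary extension of the tuple `t` by `0` at the beginning and `1` at the end. -/
def extT {k : ℕ} (t : Fin k → unitInterval) : ℕ → unitInterval :=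
  fun p => if h0 : p = 0 then 0 else if h : p ≤ k then t ⟨p - 1, by omega⟩ else 1

/-- The underlying function of the coface `dⁱ : Δ^k → Δ^{k+1}` of the standard
cosimplicial space: `d⁰` inserts `0` in front, `dⁱ` doubles `t_i` (`1 ≤ i ≤ k`),
`d^{k+1}` appends `1`. -/
def cofaceT (k i : ℕ) (t : Fin k → unitInterval) : Fin (k + 1) → unitInterval :=
  fun j => if (j : ℕ) + 1 ≤ i then extT t ((j : ℕ) + 1) else extT t (j : ℕ)

/-- The underlying function of the codegeneracy `sⁱ : Δ^{k+1} → Δ^k`: delete `t_{i+1}`. -/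
def codegenT (k i : ℕ) (t : Fin (k + 1) → unitInterval) : Fin k → unitInterval :=
  fun j => if (j : ℕ) < i then t j.castSucc else t j.succ

/-- Auxiliary extension for `ω(X,Y)`: basepoint at `0`, `y` beyond `k`. -/
def extO (star : X) {k : ℕ} (x : Fin k → X) (y : X) : ℕ → X :=
  fun p => if h0 : p = 0 then star else if h : p ≤ k then x ⟨p - 1, by omega⟩ else y

/-- Coface of the cosimplicial relative loop space `ω(X,Y)^k = X^k × Y`. -/
def cofaceO (star : X) (Y : Set X) (k i : ℕ) :
    (Fin k → X) × Y → (Fin (k + 1) → X) × Y :=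
  fun z => (fun j => if (j : ℕ) + 1 ≤ i then extO star z.1 (z.2 : X) ((j : ℕ) + 1)
                     else extO star z.1 (z.2 : X) (j : ℕ), z.2)

/-- Codegeneracy of `ω(X,Y)`. -/
def codegenO (star : X) (Y : Set X) (k i : ℕ) :
    (Fin (k + 1) → X) × Y → (Fin k → X) × Y :=
  fun z => (fun j => if (j : ℕ) < i then z.1 j.castSucc else z.1 j.succ, z.2)

/-- The totalization `Tot(ω(X,Y))`: families of continuous maps
`u_k : Δ^k → ω(X,Y)^k` compatible with all cofaces and codegeneracies, i.e. the space
of cosimplicial maps `Δ^• → ω(X,Y)`, topologised as a subspace of the product of the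
compact-open mapping spaces. -/
def Tot (star : X) (Y : Set X) : Type _ :=
  {u : ∀ k : ℕ, C(simplex k, (Fin k → X) × Y) //
    (∀ (k i : ℕ), i ≤ k + 1 → ∀ (t : simplex k) (t' : simplex (k + 1)),
      (t'.1 : Fin (k + 1) → unitInterval) = cofaceT k i t.1 →
      u (k + 1) t' = cofaceO star Y k i (u k t)) ∧
    (∀ (k i : ℕ), i ≤ k → ∀ (t : simplex (k + 1)) (t'' : simplex k),
      (t''.1 : Fin k → unitInterval) = codegenT k i t.1 →
      u k t'' = codegenO star Y k i (u (k + 1) t))}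

instance (star : X) (Y : Set X) : TopologicalSpace (Tot star Y) :=
  instTopologicalSpaceSubtype

-- ===== new material =====
variable {star : X} {Y : Set X}

/-- level-k component of the forward map -/
def fwdU (star : X) (Y : Set X) (γ : RelLoop star Y) (k : ℕ) :
    C(simplex k, (Fin k → X) × Y) :=
  ⟨fun t => (fun j => γ.1 (t.1 j), ⟨γ.1 1, γ.2.2⟩),
    (continuous_pi fun j => γ.1.continuous.comp
      ((continuous_apply j).comp continuous_subtype_val)).prodMk continuous_const⟩

lemma extO_eq (γ : RelLoop star Y) {k : ℕ} (t : Fin k → unitInterval) (p : ℕ) :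
    extO star (fun j => γ.1 (t j)) (γ.1 1) p = γ.1 (extT t p) := by
  simp only [extO, extT]
  split_ifs with h0 h
  · exact γ.2.1.symm
  · rfl
  · rfl

lemma fwd_coface (γ : RelLoop star Y) (k i : ℕ) (t : simplex k) (t' : simplex (k + 1))
    (h : (t'.1 : Fin (k + 1) → unitInterval) = cofaceT k i t.1) :
    fwdU star Y γ (k + 1) t' = cofaceO star Y k i (fwdU star Y γ k t) := by
  refine Prod.ext (funext fun j => ?_) rfl
  show γ.1 (t'.1 j) = _
  rw [congrFun h j]
  simp only [cofaceT, cofaceO, fwdU, ContinuousMap.coe_mk]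
  split_ifs with hc
  · exact (extO_eq γ t.1 ((j : ℕ) + 1)).symm
  · exact (extO_eq γ t.1 (j : ℕ)).symm

lemma fwd_codegen (γ : RelLoop star Y) (k i : ℕ) (t : simplex (k + 1)) (t'' : simplex k)
    (h : (t''.1 : Fin k → unitInterval) = codegenT k i t.1) :
    fwdU star Y γ k t'' = codegenO star Y k i (fwdU star Y γ (k + 1) t) := by
  refine Prod.ext (funext fun j => ?_) rfl
  show γ.1 (t''.1 j) = _
  rw [congrFun h j]
  simp only [codegenT, codegenO, fwdU, ContinuousMap.coe_mk]
  split_ifs <;> rfl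

def fwdMap (star : X) (Y : Set X) : RelLoop star Y → Tot star Y :=
  fun γ => ⟨fun k => fwdU star Y γ k,
    fun k i _ t t' h => fwd_coface γ k i t t' h,
    fun k i _ t t'' h => fwd_codegen γ k i t t'' h⟩

lemma continuous_fwdMap : Continuous (fwdMap star Y) := by
  refine Continuous.subtype_mk (continuous_pi fun k => ?_) _
  have hF : Continuous fun p : RelLoop star Y × simplex k =>
      ((fun j => p.1.1 (p.2.1 j), ⟨p.1.1 1, p.1.2.2⟩) : (Fin k → X) × Y) := by
    refine Continuous.prodMk (continuous_pi fun j => ?_) ?_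
    · exact continuous_eval.comp
        ((continuous_subtype_val.comp continuous_fst).prodMk
          ((continuous_apply j).comp (continuous_subtype_val.comp continuous_snd)))
    · exact Continuous.subtype_mk
        ((continuous_eval_const (1 : unitInterval)).comp
          (continuous_subtype_val.comp continuous_fst)) _
  have : Continuous fun γ : RelLoop star Y => (ContinuousMap.curry ⟨_, hF⟩) γ :=
    (ContinuousMap.curry ⟨_, hF⟩).continuous
  exact this.congr fun γ => ContinuousMap.ext fun t => rfl

-- ===== inverse map =====
-- compactness instances
lemma isClosed_mono (k : ℕ) : IsClosed {t : Fin k → unitInterval | Monotone t} := by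
  have : {t : Fin k → unitInterval | Monotone t} =
      ⋂ (p : Fin k × Fin k) (_ : p.1 ≤ p.2), {t | (t p.1 : ℝ) ≤ (t p.2 : ℝ)} := by
    ext t
    simp only [Set.mem_setOf_eq, Set.mem_iInter, Subtype.coe_le_coe]
    exact ⟨fun h p hp => h hp, fun h a b hab => h (a, b) hab⟩
  rw [this]
  exact isClosed_iInter fun p => isClosed_iInter fun _ =>
    isClosed_le (continuous_subtype_val.comp (continuous_apply p.1))
      (continuous_subtype_val.comp (continuous_apply p.2))

instance (k : ℕ) : CompactSpace (simplex k) :=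
  isCompact_iff_compactSpace.mp (isClosed_mono k).isCompact

instance (k : ℕ) : T2Space (simplex k) :=
  inferInstanceAs (T2Space {t : Fin k → unitInterval // Monotone t})

/-- the unique point of `Δ⁰` -/
def pt0 : simplex 0 := ⟨fun j => j.elim0, fun a => a.elim0⟩

/-- constant points of `Δ¹` -/
def constS (s : unitInterval) : simplex 1 := ⟨fun _ => s, monotone_const⟩

lemma continuous_constS : Continuous constS :=
  Continuous.subtype_mk (continuous_pi fun _ => continuous_id) _

/-- underlying function of the inverse map -/
def gOf (u : Tot star Y) : unitInterval → X := fun s => ((u.1 1) (constS s)).1 0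

lemma continuous_gOf (u : Tot star Y) : Continuous (gOf u) :=
  (continuous_apply (0 : Fin 1)).comp
    (continuous_fst.comp ((u.1 1).continuous.comp continuous_constS))

lemma gOf_zero (u : Tot star Y) : gOf u 0 = star := by
  have h : (constS 0).1 = cofaceT 0 0 pt0.1 := by
    funext j
    have hj : (j : ℕ) = 0 := by omega
    simp [cofaceT, extT, hj, constS]
  have := u.2.1 0 0 (by omega) pt0 (constS 0) h
  show ((u.1 1) (constS 0)).1 0 = star
  rw [this]
  simp [cofaceO, extO]

lemma gOf_one (u : Tot star Y) : gOf u 1 = (((u.1 0) pt0).2 : X) := by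
  have h : (constS 1).1 = cofaceT 0 1 pt0.1 := by
    funext j
    have hj : (j : ℕ) = 0 := by omega
    simp [cofaceT, extT, hj, constS]
  have := u.2.1 0 1 (by omega) pt0 (constS 1) h
  show ((u.1 1) (constS 1)).1 0 = _
  rw [this]
  simp [cofaceO, extO]

def invMap (star : X) (Y : Set X) : Tot star Y → RelLoop star Y :=
  fun u => ⟨⟨gOf u, continuous_gOf u⟩, gOf_zero u, by show gOf u 1 ∈ Y; rw [gOf_one]; exact ((u.1 0) pt0).2.2⟩

lemma continuous_invMap : Continuous (invMap star Y) := by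
  refine Continuous.subtype_mk ?_ _
  have hF : Continuous fun p : Tot star Y × unitInterval =>
      ((p.1.1 1 (constS p.2)).1 0 : X) := by
    refine (continuous_apply (0 : Fin 1)).comp (continuous_fst.comp ?_)
    exact continuous_eval.comp
      (((continuous_apply (1 : ℕ)).comp (continuous_subtype_val.comp continuous_fst)).prodMk
        (continuous_constS.comp continuous_snd))
  have : Continuous fun u : Tot star Y => (ContinuousMap.curry ⟨_, hF⟩) u :=
    (ContinuousMap.curry ⟨_, hF⟩).continuous
  exact this.congr fun u => ContinuousMap.ext fun s => rfl

-- ===== key lemma: u is determined by gOf u =====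
lemma monotone_codegenT {k i : ℕ} {t : Fin (k + 1) → unitInterval} (ht : Monotone t) :
    Monotone (codegenT k i t) := by
  intro a b hab
  have hab' : (a : ℕ) ≤ b := hab
  unfold codegenT
  split_ifs with ha hb hb
  · exact ht (show (a.castSucc : ℕ) ≤ b.castSucc by simpa using hab')
  · exact ht (show (a.castSucc : ℕ) ≤ b.succ by simp; omega)
  · exact ht (show (a.succ : ℕ) ≤ b.castSucc by simp; omega)
  · exact ht (show (a.succ : ℕ) ≤ b.succ by simp; omega)

lemma key (u : Tot star Y) :
    ∀ (k : ℕ) (t : simplex k),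
      (u.1 k) t = (fun j => gOf u (t.1 j), ((u.1 0) pt0).2) := by
  intro k
  induction k with
  | zero =>
    intro t
    have ht : t = pt0 := Subtype.ext (funext fun j => j.elim0)
    subst ht
    exact Prod.ext (funext fun j => j.elim0) rfl
  | succ k ih =>
    match k, ih with
    | 0, _ =>
      intro t
      have ht : t = constS (t.1 0) := Subtype.ext (funext fun j => by
        rw [Fin.eq_zero j]; rfl)
      -- second coordinate via codegeneracy s⁰ : level 1 → level 0
      have hrel := u.2.2 0 0 (by omega) t pt0 (funext fun j => j.elim0)
      refine Prod.ext (funext fun j => ?_) ?_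
      · rw [Fin.eq_zero j]
        conv_lhs => rw [ht]
        rfl
      · have := congrArg Prod.snd hrel
        exact this.symm
    | (m + 1), ih =>
      intro t
      have rel : ∀ i : ℕ, i ≤ m + 1 →
          (fun j' => gOf u ((codegenT (m + 1) i t.1) j'), ((u.1 0) pt0).2) =
            codegenO star Y (m + 1) i ((u.1 (m + 2)) t) := by
        intro i hi
        have := u.2.2 (m + 1) i hi t ⟨codegenT (m + 1) i t.1, monotone_codegenT t.2⟩ rfl
        rw [← this]
        exact (ih ⟨codegenT (m + 1) i t.1, monotone_codegenT t.2⟩).symm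
      refine Prod.ext (funext fun j => ?_) ?_
      · by_cases hj : (j : ℕ) < m + 1
        · have h1 := congrFun (congrArg Prod.fst (rel (m + 1) le_rfl)) ⟨(j : ℕ), hj⟩
          simp only [codegenO, codegenT] at h1
          rw [if_pos hj, if_pos hj] at h1
          have hcast : (⟨(j : ℕ), hj⟩ : Fin (m + 1)).castSucc = j := by
            ext; rfl
          rw [hcast] at h1
          exact h1.symm
        · have hj1 : 1 ≤ (j : ℕ) := by omega
          have hj' : (j : ℕ) - 1 < m + 1 := by omega
          have h1 := congrFun (congrArg Prod.fst (rel 0 (by omega))) ⟨(j : ℕ) - 1, hj'⟩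
          simp only [codegenO, codegenT] at h1
          rw [if_neg (by omega), if_neg (by omega)] at h1
          have hcast : (⟨(j : ℕ) - 1, hj'⟩ : Fin (m + 1)).succ = j := by
            ext; simp; omega
          rw [hcast] at h1
          exact h1.symm
      · exact (congrArg Prod.snd (rel 0 (by omega))).symm

lemma left_inv_aux (γ : RelLoop star Y) : invMap star Y (fwdMap star Y γ) = γ :=
  Subtype.ext (ContinuousMap.ext fun _ => rfl)

lemma right_inv_aux (u : Tot star Y) : fwdMap star Y (invMap star Y u) = u := by
  refine Subtype.ext (funext fun k => ContinuousMap.ext fun t => ?_)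
  refine Eq.trans ?_ (key u k t).symm
  exact Prod.ext rfl (Subtype.ext (gOf_one u))


/-- the maps `Ω(X,Y) × Δ^k → X^k × Y`,
`(γ, (t₁ ≤ ⋯ ≤ t_k)) ↦ (γ(t₁), …, γ(t_k), γ(1))` assemble into a homeomorphism
`Ω(X,Y) ≅ Tot(ω(X,Y))`. -/
theorem relLoop_homeo_tot (star : X) (Y : Set X) (hstar : star ∈ Y) :
    ∃ h : RelLoop star Y ≃ₜ Tot star Y,
      ∀ (γ : RelLoop star Y) (k : ℕ) (t : simplex k),
        ((h γ).1 k) t = (fun j => γ.1 (t.1 j), ⟨γ.1 1, γ.2.2⟩) := by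
  refine ⟨⟨⟨fwdMap star Y, invMap star Y, left_inv_aux, right_inv_aux⟩,
    continuous_fwdMap, continuous_invMap⟩, ?_⟩
  intro γ k t
  rfl

end RelLoopTot
end

section
/- Let M be a monoid with submonoid N. Define, for f = (x₁,…,x_k) a k-tuple in M and tuples g₁,…,g_k with attached elements n₁,…,n_k ∈ N, the left action ς(f, (g₁;n₁),…,(g_k;n_k)) := (γ(f; g₁, g₂ ▷ n₁, g₃ ▷ n₂n₁, …, g_k ▷ n_{k−1}⋯n₁); n_k ⋯ n₁), where γ(f; h₁,…,h_k) concatenates the tuples x_i ◁ h_i and ▷, ◁ are diagonal right/left translations. Then ς is associative: ς(γ(f; f₁,…,f_k), (g_{1,1};n_{1,1}),…) = ς(f, ς(f₁, (g_{1,1};n_{1,1}),…),…, ς(f_k, …)) whenever both sides are defined. -/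
/-- Operadic composition of the cosimplicial loop space operad of a monoid `M`:
`γ(f; h₁,…,h_k) = (x₁ ◁ h₁) ⧺ ⋯ ⧺ (x_k ◁ h_k)` where `x ◁ (y₁,…,y_l) = (xy₁,…,xy_l)`. -/
def gammaComp {M : Type*} [Monoid M] (f : List M) (fs : List (List M)) : List M :=
  ((f.zip fs).map (fun p => p.2.map (fun y => p.1 * y))).flatten

/-- The product `n_{i}⋯n₁` of the first `i` attached elements (in reversed order). -/
def multPrefix {M : Type*} [Monoid M] (N : Submonoid M) (ns : List N) (i : ℕ) : N :=
  ((ns.take i).reverse).prod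

/-- The left action `ς(f, (g₁;n₁),…,(g_k;n_k)) :=
`(γ(f; g₁, g₂ ▷ n₁, g₃ ▷ n₂n₁, …, g_k ▷ n_{k−1}⋯n₁); n_k ⋯ n₁)`,
where `▷` is the diagonal right translation. -/
def sigmaAct {M : Type*} [Monoid M] (N : Submonoid M)
    (f : List M) (gs : List (List M × N)) : List M × N :=
  ( ((f.zip (gs.zipIdx.map Prod.swap)).map
      (fun p =>
        (p.2.2.1.map (fun y => y * (multPrefix N (gs.map Prod.snd) p.2.1 : M))).map
          (fun y => p.1 * y))).flatten,
    ((gs.map Prod.snd).reverse).prod )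

section Aux
variable {M : Type*} [Monoid M] {N : Submonoid M}

/-- Recursive version of the first component of `sigmaAct`. -/
def FAux : M → List M → List (List M × N) → List M
  | q, x :: f, (g, n) :: gs => g.map (fun y => x * (y * q)) ++ FAux ((n : M) * q) f gs
  | _, _, _ => []

@[simp] lemma FAux_nil₂ (q : M) (f : List M) : FAux (N := N) q f [] = [] := by
  cases f <;> rfl

@[simp] lemma FAux_nil₁ (q : M) (gs : List (List M × N)) : FAux q [] gs = [] := by
  cases gs <;> rfl

@[simp] lemma FAux_cons (q : M) (x : M) (f : List M) (g : List M) (n : N)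
    (gs : List (List M × N)) :
    FAux q (x :: f) ((g, n) :: gs)
      = g.map (fun y => x * (y * q)) ++ FAux ((n : M) * q) f gs := rfl

/-- Shorthand for the second component. -/
def PAux (gs : List (List M × N)) : N := ((gs.map Prod.snd).reverse).prod

@[simp] lemma PAux_nil : PAux (M := M) (N := N) [] = 1 := rfl

@[simp] lemma PAux_cons (g : List M) (n : N) (gs : List (List M × N)) :
    PAux ((g, n) :: gs) = PAux gs * n := by
  simp [PAux]

lemma FAux_mul (f : List M) (gs : List (List M × N)) (p q : M) :
    FAux (p * q) f gs = (FAux p f gs).map (fun y => y * q) := by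
  induction f generalizing gs p with
  | nil => simp
  | cons x f ih =>
    cases gs with
    | nil => simp
    | cons gn gs =>
      obtain ⟨g, n⟩ := gn
      simp only [FAux_cons, List.map_append, List.map_map]
      rw [← mul_assoc, ih]
      congr 1
      simp [Function.comp, mul_assoc]

lemma FAux_one (f : List M) (gs : List (List M × N)) (q : M) :
    FAux q f gs = (FAux 1 f gs).map (fun y => y * q) := by
  rw [← FAux_mul, one_mul]

lemma FAux_map (q : M) (x : M) (h : List M) (gs : List (List M × N)) :
    FAux q (h.map (fun y => x * y)) gs = (FAux q h gs).map (fun y => x * y) := by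
  induction h generalizing gs q with
  | nil => simp
  | cons z h ih =>
    cases gs with
    | nil => simp
    | cons gn gs =>
      obtain ⟨g, n⟩ := gn
      simp [ih, mul_assoc, List.map_map, Function.comp]

lemma FAux_append (a b : List M) (c d : List (List M × N)) (hlen : a.length = c.length)
    (q : M) :
    FAux q (a ++ b) (c ++ d)
      = FAux q a c ++ FAux ((PAux c : M) * q) b d := by
  induction a generalizing c q with
  | nil =>
    rw [List.length_nil] at hlen
    obtain rfl : c = [] := by exact (List.eq_nil_of_length_eq_zero hlen.symm)
    simp
  | cons x a ih =>
    cases c with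
    | nil => simp at hlen
    | cons gn c =>
      obtain ⟨g, n⟩ := gn
      simp only [List.cons_append, FAux_cons, PAux_cons]
      rw [ih _ (by simpa using hlen), List.append_assoc]
      congr 3
      push_cast
      rw [mul_assoc]

lemma gammaComp_cons (x : M) (f : List M) (h : List M) (fs : List (List M)) :
    gammaComp (x :: f) (h :: fs) = h.map (fun y => x * y) ++ gammaComp f fs := by
  simp [gammaComp]

lemma sigmaAct_fst_gen (f : List M) (gs : List (List M × N)) (ns0 : List N) :
    ((f.zip ((gs.zipIdx ns0.length).map Prod.swap)).map
      (fun p =>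
        (p.2.2.1.map (fun y => y * (multPrefix N (ns0 ++ gs.map Prod.snd) p.2.1 : M))).map
          (fun y => p.1 * y))).flatten
      = FAux ((ns0.reverse.prod : N) : M) f gs := by
  induction f generalizing gs ns0 with
  | nil => simp
  | cons x f ih =>
    cases gs with
    | nil => simp
    | cons gn gs =>
      obtain ⟨g, n⟩ := gn
      simp only [List.zipIdx_cons, Prod.swap_prod_mk, List.zip_cons_cons, List.map_cons, List.flatten_cons,
        FAux_cons]
      have h1 : multPrefix N (ns0 ++ (g, n).snd :: gs.map Prod.snd) ns0.length
          = ns0.reverse.prod := by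
        simp [multPrefix, List.take_left']
      have h2 : ns0 ++ (g, n).snd :: List.map Prod.snd gs
          = (ns0 ++ [n]) ++ List.map Prod.snd gs := by simp
      have h3 := ih gs (ns0 ++ [n])
      simp only [List.length_append, List.length_singleton, List.reverse_append,
        List.reverse_cons, List.reverse_nil, List.nil_append, List.prod_cons,
        List.singleton_append] at h3
      rw [h1, h2, h3]
      push_cast
      congr 1
      simp [Function.comp, mul_assoc]

lemma sigmaAct_eq (f : List M) (gs : List (List M × N)) :
    sigmaAct N f gs = (FAux 1 f gs, PAux gs) := by
  have := sigmaAct_fst_gen (N := N) f gs []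
  simp only [List.length_nil, List.nil_append, List.reverse_nil, List.prod_nil,
    OneMemClass.coe_one] at this
  unfold sigmaAct
  rw [Prod.mk.injEq]
  exact ⟨this, rfl⟩

lemma PAux_flatten (gss : List (List (List M × N))) :
    PAux gss.flatten = ((gss.map PAux).reverse).prod := by
  induction gss with
  | nil => rfl
  | cons gs gss ih =>
    simp only [List.flatten_cons, PAux, List.map_append, List.reverse_append,
      List.prod_append, List.map_cons, List.reverse_cons, List.prod_concat]
    rw [← PAux, ← PAux, ih, PAux]
    simp

lemma FAux_main (fs : List (List M)) (f : List M) (gss : List (List (List M × N)))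
    (h1 : fs.length = f.length) (h2 : gss.length = fs.length)
    (h3 : ∀ (i : ℕ) (hi : i < fs.length) (hi' : i < gss.length),
      (gss[i]).length = (fs[i]).length) (q : M) :
    FAux q (gammaComp f fs) gss.flatten
      = FAux q f ((fs.zip gss).map (fun p => (FAux 1 p.1 p.2, PAux p.2))) := by
  induction fs generalizing f gss q with
  | nil =>
    obtain rfl : gss = [] := List.eq_nil_of_length_eq_zero h2
    simp [gammaComp]
  | cons h fs ih =>
    cases f with
    | nil => simp at h1
    | cons x f =>
      cases gss with
      | nil => simp at h2
      | cons gs gss =>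
        have hlen0 : gs.length = h.length := h3 0 (by simp) (by simp)
        rw [gammaComp_cons, List.flatten_cons,
          FAux_append (h.map (fun y => x * y)) _ gs _ (by simpa using hlen0.symm),
          FAux_map, FAux_one (f := h),
          ih f gss (by simpa using h1) (by simpa using h2)
            (fun i hi hi' => h3 (i + 1) (by simpa using hi) (by simpa using hi'))]
        simp [List.map_map, Function.comp]

end Aux

/-- the left action `ς` is associative with respect to the operadic
composition `γ`:
`ς(γ(f; f₁,…,f_k), (g_{1,1};n_{1,1}),…) = ς(f, ς(f₁, (g_{1,1};n_{1,1}),…),…, ς(f_k, …))`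
whenever both sides are defined (i.e. the lengths match). -/
theorem sigmaAct_assoc {M : Type*} [Monoid M] (N : Submonoid M)
    (f : List M) (fs : List (List M)) (gss : List (List (List M × N)))
    (h1 : fs.length = f.length) (h2 : gss.length = fs.length)
    (h3 : ∀ (i : ℕ) (hi : i < fs.length) (hi' : i < gss.length),
      (gss[i]).length = (fs[i]).length) :
    sigmaAct N (gammaComp f fs) gss.flatten
      = sigmaAct N f ((fs.zip gss).map (fun p => sigmaAct N p.1 p.2)) := by
  simp only [sigmaAct_eq]
  rw [Prod.mk.injEq]
  constructor
  · exact FAux_main fs f gss h1 h2 h3 1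
  · rw [PAux_flatten]
    have hzip : ((fs.zip gss).map (fun p => (FAux 1 p.1 p.2, PAux p.2))).map Prod.snd
        = gss.map PAux := by
      rw [List.map_map]
      have : (fs.zip gss).map (Prod.snd ∘ fun p => (FAux 1 p.1 p.2, PAux p.2))
          = (fs.zip gss).map (PAux ∘ Prod.snd) := by rfl
      rw [this, ← List.map_map, List.map_snd_zip (le_of_eq h2)]
    rw [PAux, hzip]
end
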